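/- In the setting of a free bipolar decomposition: if u is a unitary with E'(u)=0, x is self-adjoint, u and x are *-free over B, and a has the same *-distribution as ux, then E((aa*)^k) = θ^{-1}(E((a*a)^k)) for all k≥0, whenever u normalizes B with induced automorphism θ(b)=u*bu. -/

import Mathlib

open scoped BigOperators

/-- Two subsets `S`, `T` are free with respect to the B-valued conditional
expectation `E`: alternating products of `E`-centered elements from `S` and
`T` have zero expectation (`true` marks `S`, `false` marks `T`). -/
def FreePairB {A B : Type*} [Ring A] [Ring B] [Algebra ℂ A] [Algebra ℂ B]
    (E : A →ₗ[ℂ] B) (S T : Set A) : Prop :=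
  ∀ l : List (A × Bool), l ≠ [] →
    (∀ p ∈ l, E p.1 = 0 ∧ (p.2 = true → p.1 ∈ S) ∧ (p.2 = false → p.1 ∈ T)) →
    l.Chain' (fun p q => p.2 ≠ q.2) →
    E (l.map Prod.fst).prod = 0

/-- Alternating list of booleans (with unit B-entries), used to encode
`(f b * f (!b))^k` as a list product. -/
def altList {B : Type*} [One B] (b : Bool) : ℕ → List (Bool × B)
  | 0 => []
  | k + 1 => (b, 1) :: (!b, 1) :: altList b k

lemma altList_prod {A B : Type*} [Monoid A] [One B] (f : Bool × B → A) (b : Bool) :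
    ∀ k : ℕ, ((altList (B := B) b k).map f).prod = (f (b, 1) * f (!b, 1)) ^ k := by
  intro k
  induction k with
  | zero => simp [altList]
  | succ n ih => simp [altList, ih, pow_succ, pow_mul_comm', mul_assoc]

/-- If `u` is a unitary with `E'(u) = 0` normalizing `B` with automorphism
`θ(b) = u* b u`, `x` is self-adjoint, `u` and `x` are *-free over `B`, and `a`
has the same B-valued *-distribution as `ux`, then
`E((aa*)ᵏ) = θ⁻¹(E((a*a)ᵏ))` for all `k ≥ 0`. -/
theorem bipolar_theta_inverse_moments
    {B : Type*} [Ring B] [StarRing B] [Algebra ℂ B] [StarModule ℂ B]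
    {A A' : Type*}
    [Ring A] [StarRing A] [Algebra ℂ A] [StarModule ℂ A]
    [Ring A'] [StarRing A'] [Algebra ℂ A'] [StarModule ℂ A']
    -- the space (A', E') containing u and x
    (ι' : B →⋆ₐ[ℂ] A') (E' : A' →ₗ[ℂ] B)
    (hι' : Function.Injective ι')
    (hE'ι : ∀ b : B, E' (ι' b) = b)
    (hE'star : ∀ z : A', E' (star z) = star (E' z))
    (hE'bimod : ∀ z : A', ∀ b₁ b₂ : B, E' (ι' b₁ * z * ι' b₂) = b₁ * E' z * b₂)
    (u x : A')
    (huu : u * star u = 1) (hsuu : star u * u = 1)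
    (hE'u : E' u = 0) (hxsa : star x = x)
    (hfree : FreePairB E'
      (StarAlgebra.adjoin ℂ (insert u (Set.range ι')) : StarSubalgebra ℂ A')
      (StarAlgebra.adjoin ℂ (insert x (Set.range ι')) : StarSubalgebra ℂ A'))
    -- u normalizes B with induced automorphism θ
    (θ : B ≃⋆ₐ[ℂ] B)
    (hθ : ∀ b : B, star u * ι' b * u = ι' (θ b))
    -- the space (A, E) containing a, with a distributed as ux
    (ι : B →⋆ₐ[ℂ] A) (E : A →ₗ[ℂ] B)
    (hι : Function.Injective ι)
    (hEι : ∀ b : B, E (ι b) = b)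
    (hEstar : ∀ z : A, E (star z) = star (E z))
    (hEbimod : ∀ z : A, ∀ b₁ b₂ : B, E (ι b₁ * z * ι b₂) = b₁ * E z * b₂)
    (a : A)
    (hdist : ∀ l : List (Bool × B),
      E ((l.map fun p => (if p.1 then a else star a) * ι p.2).prod)
        = E' ((l.map fun p => (if p.1 then u * x else star (u * x)) * ι' p.2).prod)) :
    ∀ k : ℕ, E ((a * star a) ^ k) = θ.symm (E ((star a * a) ^ k)) := by
  intro k
  have hsux : star (u * x) = x * star u := by rw [star_mul, hxsa]
  have hpow1 : ∀ n : ℕ, (u * x * star (u * x)) ^ n = u * x ^ (2 * n) * star u := by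
    intro n
    induction n with
    | zero => simpa using huu.symm
    | succ n ih =>
        rw [pow_succ', ih, hsux]
        have h2 : 2 * (n + 1) = 2 + 2 * n := by ring
        rw [h2, pow_add]
        calc u * x * (x * star u) * (u * x ^ (2 * n) * star u)
            = u * (x * x) * ((star u * u) * (x ^ (2 * n) * star u)) := by
              noncomm_ring
          _ = u * (x ^ 2 * x ^ (2 * n)) * star u := by
              rw [hsuu, one_mul, sq]; noncomm_ring
  have hpow2 : ∀ n : ℕ, (star (u * x) * (u * x)) ^ n = x ^ (2 * n) := by
    intro n
    induction n with
    | zero => simp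
    | succ n ih =>
        rw [pow_succ', ih, hsux]
        have h2 : 2 * (n + 1) = 2 + 2 * n := by ring
        rw [h2, pow_add]
        calc x * star u * (u * x) * x ^ (2 * n)
            = x * (star u * u) * x * x ^ (2 * n) := by noncomm_ring
          _ = x ^ 2 * x ^ (2 * n) := by rw [hsuu]; noncomm_ring
  -- step 1: moments of a in terms of u, x
  have hL : E ((a * star a) ^ k) = E' (u * x ^ (2 * k) * star u) := by
    have h1 := hdist (altList true k)
    rw [altList_prod, altList_prod] at h1
    simp only [Bool.not_true, Bool.false_eq_true, if_true, if_false, map_one, mul_one] at h1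
    rw [h1, hpow1]
  have hR : E ((star a * a) ^ k) = E' (x ^ (2 * k)) := by
    have h1 := hdist (altList false k)
    rw [altList_prod, altList_prod] at h1
    simp only [Bool.not_false, Bool.false_eq_true, if_true, if_false, map_one, mul_one] at h1
    rw [h1, hpow2]
  -- step 2: the freeness computation  E'(u y u*) = θ⁻¹ (E' y)  for y = x^(2k)
  set y : A' := x ^ (2 * k) with hy
  set b : B := E' y with hb
  have hcen : E' (y - ι' b) = 0 := by
    rw [map_sub, hE'ι, hb, sub_self]
  have hE'su : E' (star u) = 0 := by rw [hE'star, hE'u, star_zero]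
  have humem : u ∈ (StarAlgebra.adjoin ℂ (insert u (Set.range ι')) : StarSubalgebra ℂ A') :=
    StarAlgebra.subset_adjoin ℂ _ (Set.mem_insert _ _)
  have hsumem : star u ∈ (StarAlgebra.adjoin ℂ (insert u (Set.range ι')) : StarSubalgebra ℂ A') :=
    star_mem humem
  have hymem : y - ι' b ∈
      (StarAlgebra.adjoin ℂ (insert x (Set.range ι')) : StarSubalgebra ℂ A') := by
    have hx : x ∈ (StarAlgebra.adjoin ℂ (insert x (Set.range ι')) : StarSubalgebra ℂ A') :=
      StarAlgebra.subset_adjoin ℂ _ (Set.mem_insert _ _)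
    have hιb : ι' b ∈ (StarAlgebra.adjoin ℂ (insert x (Set.range ι')) : StarSubalgebra ℂ A') :=
      StarAlgebra.subset_adjoin ℂ _ (Set.mem_insert_of_mem _ ⟨b, rfl⟩)
    exact sub_mem (pow_mem hx _) hιb
  have hfree0 : E' (u * (y - ι' b) * star u) = 0 := by
    have := hfree [(u, true), (y - ι' b, false), (star u, true)]
      (by simp)
      (by
        intro p hp
        simp only [List.mem_cons, List.not_mem_nil, or_false] at hp
        rcases hp with h | h | h <;> subst h
        · exact ⟨hE'u, fun _ => humem, fun h => by simp at h⟩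
        · exact ⟨hcen, fun h => by simp at h, fun _ => hymem⟩
        · exact ⟨hE'su, fun _ => hsumem, fun h => by simp at h⟩)
      (by simp [List.Chain'])
    simpa [mul_assoc] using this
  have hconj : u * ι' b * star u = ι' (θ.symm b) := by
    have h1 := hθ (θ.symm b)
    rw [StarAlgEquiv.apply_symm_apply] at h1
    calc u * ι' b * star u = u * (star u * ι' (θ.symm b) * u) * star u := by rw [h1]
      _ = (u * star u) * ι' (θ.symm b) * (u * star u) := by noncomm_ring
      _ = ι' (θ.symm b) := by rw [huu, one_mul, mul_one]
  have hkey : E' (u * y * star u) = θ.symm b := by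
    have hsplit : u * y * star u = u * (y - ι' b) * star u + u * ι' b * star u := by
      noncomm_ring
    rw [hsplit, map_add, hfree0, zero_add, hconj, hE'ι]
  rw [hL, hR, hkey, hb]
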